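/- Let k, m, n be nonnegative integers with k+m ≤ n and let Z be an n×(k+m) real matrix all of whose maximal (k+m)×(k+m) minors are positive, and let C be a k×n matrix all of whose maximal k×k minors are positive. Let Y = CZ. Then for every even m and every list I = (i_1, i_1+1, ..., i_{m/2}, i_{m/2}+1) of m strictly increasing integers in [n], the twistor coordinate ⟨Y, I⟩ is strictly positive. -/

import Mathlib

/-- Twistor coordinate. -/
noncomputable def twistor {k m n : ℕ} (Z : Matrix (Fin n) (Fin (k + m)) ℝ)
    (Y : Matrix (Fin k) (Fin (k + m)) ℝ) (L : Fin m → Fin n) : ℝ :=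
  Matrix.det (Matrix.of fun i j : Fin k ⊕ Fin m =>
    Sum.elim (fun a => Y a) (fun b => Z (L b)) i (finSumFinEquiv j))

/-- All maximal `p × p` minors of the `n × p` matrix `Z` (rows selected by a strictly
increasing list) are positive. -/
def PosMaximalMinors {n p : ℕ} (Z : Matrix (Fin n) (Fin p) ℝ) : Prop :=
  ∀ f : Fin p → Fin n, StrictMono f → 0 < Matrix.det (Matrix.of fun a b => Z (f a) b)

/-- All maximal `k × k` minors of the `k × n` matrix `C` (columns selected by a strictly
increasing list) are positive. -/
def PosRowMinors {k n : ℕ} (C : Matrix (Fin k) (Fin n) ℝ) : Prop :=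
  ∀ g : Fin k → Fin n, StrictMono g → 0 < Matrix.det (Matrix.of fun a b => C a (g b))

/-- The list `I` consists of consecutive pairs: the entry at each odd position is the
successor of the entry at the preceding even position. -/
def ConsecPairs {m n : ℕ} (I : Fin m → Fin n) : Prop :=
  ∀ a b : Fin m, (a : ℕ) + 1 = (b : ℕ) → (a : ℕ) % 2 = 0 → (I b : ℕ) = (I a : ℕ) + 1


open Equiv Finset

lemma mySign_eq_signAux {p : ℕ} (σ : Equiv.Perm (Fin p)) :
    Equiv.Perm.sign σ = Equiv.Perm.signAux σ := by
  refine Equiv.Perm.swap_induction_on σ (by simp [Equiv.Perm.signAux_one]) ?_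
  intro f x y hxy ih
  rw [Equiv.Perm.sign_mul, Equiv.Perm.signAux_mul, ih, Equiv.Perm.sign_swap hxy,
    Equiv.Perm.signAux_swap hxy]

lemma prod_pm_one_eq_one {α : Type*} {s : Finset α} {P : α → Prop} [DecidablePred P]
    (J : α → α) (h : ∀ x ∈ s, P x → (J x ∈ s ∧ P (J x) ∧ J x ≠ x ∧ J (J x) = x)) :
    ∏ x ∈ s, (if P x then (-1 : ℤˣ) else 1) = 1 := by
  refine Finset.prod_involution (fun a ha => if P a then J a else a) ?_ ?_ ?_ ?_
  · intro a ha
    by_cases hP : P a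
    · simp only [hP, if_pos, if_pos ((h a ha hP).2.1)]
      norm_num
    · simp [hP]
  · intro a ha hne
    by_cases hP : P a
    · simpa [hP] using (h a ha hP).2.2.1
    · simp [hP] at hne
  · intro a ha
    by_cases hP : P a
    · simpa [hP] using (h a ha hP).1
    · simpa [hP] using ha
  · intro a ha
    by_cases hP : P a
    · have := h a ha hP
      simp only [hP, if_pos, this.2.1, this.2.2.2]
    · simp [hP]

lemma signAux_eq_one {p : ℕ} (τ : Equiv.Perm (Fin p))
    (J : (Σ _ : Fin p, Fin p) → (Σ _ : Fin p, Fin p))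
    (h : ∀ x ∈ Equiv.Perm.finPairsLT p, τ x.1 ≤ τ x.2 →
      (J x ∈ Equiv.Perm.finPairsLT p ∧ τ (J x).1 ≤ τ (J x).2 ∧ J x ≠ x ∧ J (J x) = x)) :
    Equiv.Perm.signAux τ = 1 :=
  prod_pm_one_eq_one J h

lemma sign_eq_one_of_inv {p : ℕ} (σ : Equiv.Perm (Fin p))
    (J : (Σ _ : Fin p, Fin p) → (Σ _ : Fin p, Fin p))
    (h : ∀ x ∈ Equiv.Perm.finPairsLT p, σ x.1 ≤ σ x.2 →
      (J x ∈ Equiv.Perm.finPairsLT p ∧ σ (J x).1 ≤ σ (J x).2 ∧ J x ≠ x ∧ J (J x) = x)) :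
    Equiv.Perm.sign σ = 1 := by
  rw [mySign_eq_signAux]; exact signAux_eq_one σ J h

def pairSwap {m : ℕ} (hm : Even m) : Fin m → Fin m := fun t =>
  if h : (t : ℕ) % 2 = 0 then
    ⟨t + 1, by obtain ⟨r, hr⟩ := hm; have := t.2; omega⟩
  else ⟨t - 1, by have := t.2; omega⟩

lemma pairSwap_val {m : ℕ} (hm : Even m) (t : Fin m) :
    (pairSwap hm t : ℕ) = if (t : ℕ) % 2 = 0 then (t : ℕ) + 1 else (t : ℕ) - 1 := by
  simp only [pairSwap]
  split_ifs with h <;> simp [h]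

lemma pairSwap_ne {m : ℕ} (hm : Even m) (t : Fin m) : pairSwap hm t ≠ t := by
  intro he
  have := congrArg Fin.val he
  rw [pairSwap_val] at this
  split_ifs at this <;> omega

lemma pairSwap_invol {m : ℕ} (hm : Even m) (t : Fin m) :
    pairSwap hm (pairSwap hm t) = t := by
  apply Fin.ext
  rw [pairSwap_val, pairSwap_val]
  rcases Nat.even_or_odd (t : ℕ) with h | h
  · have h0 : (t : ℕ) % 2 = 0 := Nat.even_iff.1 h
    simp [h0, Nat.add_mod]
  · have h0 : ¬ (t : ℕ) % 2 = 0 := by rw [Nat.odd_iff] at h; omega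
    have h1 : 1 ≤ (t : ℕ) := by rw [Nat.odd_iff] at h; omega
    have h2 : ((t : ℕ) - 1) % 2 = 0 := by rw [Nat.odd_iff] at h; omega
    simp [h0, h2]
    omega

lemma pairSwap_lt {k m n : ℕ} (hm : Even m) {g : Fin k → Fin n} {I : Fin m → Fin n}
    (hI : StrictMono I) (hpair : ConsecPairs I) (hd : ∀ a b, g a ≠ I b)
    {t : Fin m} {i : Fin k} (hlt : I t < g i) : I (pairSwap hm t) < g i := by
  by_cases h : (t : ℕ) % 2 = 0
  · have hpt : (pairSwap hm t : ℕ) = (t : ℕ) + 1 := by simp [pairSwap, h]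
    have h1 : (I (pairSwap hm t) : ℕ) = (I t : ℕ) + 1 := hpair t _ hpt.symm h
    have h2 : (g i : ℕ) ≠ (I (pairSwap hm t) : ℕ) := by
      intro he; exact hd i _ (Fin.ext he)
    have h3 : (I t : ℕ) < (g i : ℕ) := hlt
    exact Fin.lt_def.2 (by omega)
  · have hpt : (pairSwap hm t : ℕ) = (t : ℕ) - 1 := by simp [pairSwap, h]
    have h1 : (I t : ℕ) = (I (pairSwap hm t) : ℕ) + 1 := by
      refine hpair (pairSwap hm t) t (by omega) (by omega)
    have h3 : (I t : ℕ) < (g i : ℕ) := hlt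
    exact Fin.lt_def.2 (by omega)

lemma sort_sign_one {k m n : ℕ} (hm : Even m) {g : Fin k → Fin n} (hg : StrictMono g)
    {I : Fin m → Fin n} (hI : StrictMono I) (hpair : ConsecPairs I)
    (hd : ∀ a b, g a ≠ I b) :
    Equiv.Perm.sign (Tuple.sort (Sum.elim g I ∘ finSumFinEquiv.symm)) = 1 := by
  set F : Fin (k + m) → Fin n := Sum.elim g I ∘ finSumFinEquiv.symm with hF
  have hFinj : Function.Injective F := by
    apply Function.Injective.comp _ (Equiv.injective _)
    intro u v huv
    cases u with
    | inl a => cases v with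
      | inl b => simp only [Sum.elim_inl] at huv; rw [hg.injective huv]
      | inr b => exact absurd huv (hd a b)
    | inr a => cases v with
      | inl b => exact absurd huv.symm (hd b a)
      | inr b => simp only [Sum.elim_inr] at huv; rw [hI.injective huv]
  have hh : StrictMono (F ∘ Tuple.sort F) :=
    (Tuple.monotone_sort F).strictMono_of_injective (hFinj.comp (Equiv.injective _))
  rw [← Equiv.Perm.sign_inv]
  set τ := (Tuple.sort F)⁻¹ with hτ
  have hFt : ∀ i, (F ∘ Tuple.sort F) (τ i) = F i := by
    intro i; simp [hτ, Function.comp]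
  have key : ∀ a b : Fin (k + m), a ≠ b → (τ a ≤ τ b ↔ F a < F b) := by
    intro a b hab
    have hne : τ a ≠ τ b := fun h => hab (Equiv.injective _ h)
    constructor
    · intro hle
      rw [← hFt a, ← hFt b]
      exact hh (lt_of_le_of_ne hle hne)
    · intro hlt
      rw [← hFt a, ← hFt b] at hlt
      exact (hh.lt_iff_lt.1 hlt).le
  -- the involution on pairs
  set J : (Σ _ : Fin (k + m), Fin (k + m)) → (Σ _ : Fin (k + m), Fin (k + m)) :=
    fun x => ⟨Sum.elim (fun _ => x.1) (fun t => finSumFinEquiv (Sum.inr (pairSwap hm t)))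
      (finSumFinEquiv.symm x.1), x.2⟩ with hJ
  apply sign_eq_one_of_inv τ J
  intro x hx hle
  have hmem : x.2 < x.1 := Equiv.Perm.mem_finPairsLT.1 hx
  have hFlt : F x.1 < F x.2 := (key _ _ (ne_of_gt hmem)).1 hle
  -- decompose x.1 and x.2
  obtain ⟨u, hu⟩ : ∃ u, x.1 = finSumFinEquiv u := ⟨_, (Equiv.apply_symm_apply _ _).symm⟩
  obtain ⟨v, hv⟩ : ∃ v, x.2 = finSumFinEquiv v := ⟨_, (Equiv.apply_symm_apply _ _).symm⟩
  have hFu : F x.1 = Sum.elim g I u := by rw [hu, hF]; simp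
  have hFv : F x.2 = Sum.elim g I v := by rw [hv, hF]; simp
  obtain ⟨t, rfl⟩ : ∃ t, u = Sum.inr t := by
    cases u with
    | inl a =>
      exfalso
      cases v with
      | inl b =>
        have h1 : g a < g b := by rw [hFu, hFv] at hFlt; exact hFlt
        have h2 : (finSumFinEquiv (Sum.inl b) : Fin (k+m)) < finSumFinEquiv (Sum.inl a) := by
          rw [← hu, ← hv]; exact hmem
        simp only [finSumFinEquiv_apply_left, Fin.lt_def, Fin.coe_castAdd] at h2
        have h3 : (a : ℕ) < (b : ℕ) := hg.lt_iff_lt.1 h1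
        omega
      | inr b =>
        have h2 : (finSumFinEquiv (Sum.inr b) : Fin (k+m)) < finSumFinEquiv (Sum.inl a) := by
          rw [← hu, ← hv]; exact hmem
        simp only [finSumFinEquiv_apply_left, finSumFinEquiv_apply_right, Fin.lt_def,
          Fin.coe_castAdd, Fin.coe_natAdd] at h2
        have := a.2
        omega
    | inr t => exact ⟨t, rfl⟩
  obtain ⟨i, rfl⟩ : ∃ i, v = Sum.inl i := by
    cases v with
    | inl i => exact ⟨i, rfl⟩
    | inr t' =>
      exfalso
      have h1 : I t < I t' := by rw [hFu, hFv] at hFlt; exact hFlt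
      have h2 : (finSumFinEquiv (Sum.inr t') : Fin (k+m)) < finSumFinEquiv (Sum.inr t) := by
        rw [← hu, ← hv]; exact hmem
      simp only [finSumFinEquiv_apply_right, Fin.lt_def, Fin.coe_natAdd] at h2
      have h3 : t < t' := hI.lt_iff_lt.1 h1
      have h4 : (t : ℕ) < t' := h3
      omega
  -- main case
  have hIt : I t < g i := by rw [hFu, hFv] at hFlt; exact hFlt
  have hJx1 : (J x).1 = finSumFinEquiv (Sum.inr (pairSwap hm t)) := by
    simp only [hJ, hu, Equiv.symm_apply_apply, Sum.elim_inr]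
  have hJx2 : (J x).2 = x.2 := rfl
  have hFJ1 : F (J x).1 = I (pairSwap hm t) := by rw [hJx1, hF]; simp
  have hmemJ : (J x).2 < (J x).1 := by
    rw [hJx1, hJx2, hv]
    simp only [finSumFinEquiv_apply_left, finSumFinEquiv_apply_right, Fin.lt_def,
      Fin.coe_castAdd, Fin.coe_natAdd]
    have := i.2
    omega
  have hJne1 : (J x).1 ≠ (J x).2 := ne_of_gt hmemJ
  have hFJlt : F (J x).1 < F (J x).2 := by
    rw [hFJ1, hJx2, hFv]
    exact pairSwap_lt hm hI hpair hd hIt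
  refine ⟨Equiv.Perm.mem_finPairsLT.2 hmemJ, (key _ _ hJne1).2 hFJlt, ?_, ?_⟩
  · intro he
    have h1 : (J x).1 = x.1 := congrArg Sigma.fst he
    rw [hJx1, hu] at h1
    exact pairSwap_ne hm t (Sum.inr_injective (Equiv.injective _ h1))
  · have h1 : (J (J x)).1 = x.1 := by
      show Sum.elim _ _ (finSumFinEquiv.symm (J x).1) = x.1
      rw [hJx1, Equiv.symm_apply_apply, Sum.elim_inr, pairSwap_invol, ← hu]
    exact Sigma.ext h1 (heq_of_eq rfl)

open Matrix in
lemma expand_det (k m n : ℕ) (Z : Matrix (Fin n) (Fin (k + m)) ℝ)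
    (C : Matrix (Fin k) (Fin n) ℝ) (I : Fin m → Fin n) :
    Matrix.det (Matrix.of fun i j : Fin k ⊕ Fin m =>
        Sum.elim (fun a => (C * Z) a) (fun b => Z (I b)) i (finSumFinEquiv j))
    = ∑ f : Fin k → Fin n, (∏ a, C a (f a)) *
        Matrix.det (Matrix.of fun i j : Fin k ⊕ Fin m =>
          Z (Sum.elim f I i) (finSumFinEquiv j)) := by
  classical
  set Rw : Fin n → (Fin k ⊕ Fin m → ℝ) := fun x j => Z x (finSumFinEquiv j) with hRw
  set A : Fin k ⊕ Fin m → Finset (Fin n) :=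
    Sum.elim (fun _ => Finset.univ) (fun b => {I b}) with hA
  set gg : (i : Fin k ⊕ Fin m) → Fin n → (Fin k ⊕ Fin m → ℝ) :=
    fun i => Sum.elim (fun a x => C a x • Rw x) (fun _ x => Rw x) i with hgg
  have hrows : (Matrix.of fun i j : Fin k ⊕ Fin m =>
      Sum.elim (fun a => (C * Z) a) (fun b => Z (I b)) i (finSumFinEquiv j))
      = fun i => ∑ x ∈ A i, gg i x := by
    funext i j
    cases i with
    | inl a =>
      simp only [Matrix.of_apply, Sum.elim_inl, Matrix.mul_apply, hA, hgg]
      rw [Finset.sum_apply]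
      simp [hRw]
    | inr b =>
      simp only [Matrix.of_apply, Sum.elim_inr, hA, hgg]
      rw [Finset.sum_apply]
      simp [hRw]
  have hdet : ∀ (M : Matrix (Fin k ⊕ Fin m) (Fin k ⊕ Fin m) ℝ),
      M.det = Matrix.detRowAlternating M := fun _ => rfl
  rw [hdet, hrows]
  show ((Matrix.detRowAlternating (R := ℝ) (n := Fin k ⊕ Fin m)).toMultilinearMap
    fun i => ∑ x ∈ A i, gg i x) = _
  rw [(Matrix.detRowAlternating (R := ℝ) (n := Fin k ⊕ Fin m)).toMultilinearMap.map_sum_finset gg A]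
  refine Finset.sum_nbij' (fun r => fun a => r (Sum.inl a)) (fun f => Sum.elim f I)
    ?_ ?_ ?_ ?_ ?_
  · intro r hr; exact Finset.mem_univ _
  · intro f hf
    rw [Fintype.mem_piFinset]
    intro i
    cases i with
    | inl a => simp [hA]
    | inr b => simp [hA]
  · intro r hr
    rw [Fintype.mem_piFinset] at hr
    funext i
    cases i with
    | inl a => simp
    | inr b =>
      have := hr (Sum.inr b)
      simp [hA] at this
      simp [this]
  · intro f hf
    funext a
    simp
  · intro r hr
    rw [Fintype.mem_piFinset] at hr
    set f : Fin k → Fin n := fun a => r (Sum.inl a) with hf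
    have hrr : ∀ i, gg i (r i) =
        (Sum.elim (fun a => C a (f a)) (fun _ => (1:ℝ)) i) • Rw (Sum.elim f I i) := by
      intro i
      cases i with
      | inl a => simp [hgg, hf]
      | inr b =>
        have := hr (Sum.inr b)
        simp [hA] at this
        simp [hgg, this]
    have : (fun i => gg i (r i)) =
        fun i => (Sum.elim (fun a => C a (f a)) (fun _ => (1:ℝ)) i) • Rw (Sum.elim f I i) := by
      funext i; exact hrr i
    rw [this, MultilinearMap.map_smul_univ]
    rw [Fintype.prod_sum_type]
    simp only [Sum.elim_inl, Sum.elim_inr, Finset.prod_const_one, mul_one]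
    rw [hdet]
    rfl

lemma Dg_pos {k m n : ℕ} (hm : Even m) (Z : Matrix (Fin n) (Fin (k + m)) ℝ)
    (hZ : ∀ f : Fin (k+m) → Fin n, StrictMono f → 0 < Matrix.det (Matrix.of fun a b => Z (f a) b))
    {g : Fin k → Fin n} {I : Fin m → Fin n} (hg : StrictMono g) (hI : StrictMono I)
    (hpair : ConsecPairs I) (hd : ∀ a b, g a ≠ I b) :
    0 < Matrix.det (Matrix.of fun i j : Fin k ⊕ Fin m => Z (Sum.elim g I i) (finSumFinEquiv j)) := by
  classical
  set F : Fin (k + m) → Fin n := Sum.elim g I ∘ finSumFinEquiv.symm with hF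
  have hFinj : Function.Injective F := by
    apply Function.Injective.comp _ (Equiv.injective _)
    intro u v huv
    cases u with
    | inl a => cases v with
      | inl b => simp only [Sum.elim_inl] at huv; rw [hg.injective huv]
      | inr b => exact absurd huv (hd a b)
    | inr a => cases v with
      | inl b => exact absurd huv.symm (hd b a)
      | inr b => simp only [Sum.elim_inr] at huv; rw [hI.injective huv]
  set σs := Tuple.sort F with hσs
  have hh : StrictMono (F ∘ σs) :=
    (Tuple.monotone_sort F).strictMono_of_injective (hFinj.comp (Equiv.injective _))
  have h1 : Matrix.det (Matrix.of fun i j : Fin k ⊕ Fin m => Z (Sum.elim g I i) (finSumFinEquiv j))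
      = Matrix.det ((Matrix.of fun i j : Fin k ⊕ Fin m =>
          Z (Sum.elim g I i) (finSumFinEquiv j)).submatrix
          (finSumFinEquiv.symm : Fin (k+m) ≃ Fin k ⊕ Fin m)
          (finSumFinEquiv.symm : Fin (k+m) ≃ Fin k ⊕ Fin m)) :=
    (Matrix.det_submatrix_equiv_self finSumFinEquiv.symm _).symm
  have h2 : ((Matrix.of fun i j : Fin k ⊕ Fin m =>
      Z (Sum.elim g I i) (finSumFinEquiv j)).submatrix
      (finSumFinEquiv.symm : Fin (k+m) ≃ Fin k ⊕ Fin m)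
      (finSumFinEquiv.symm : Fin (k+m) ≃ Fin k ⊕ Fin m))
      = (Matrix.of fun i j : Fin (k+m) => Z ((F ∘ σs) i) j).submatrix ⇑(σs⁻¹) id := by
    ext i j
    simp only [Matrix.submatrix_apply, Matrix.of_apply, Function.comp_apply, id_eq,
      Equiv.apply_symm_apply]
    rw [Equiv.Perm.coe_inv, Equiv.apply_symm_apply]
    rfl
  rw [h1, h2, Matrix.det_permute σs⁻¹]
  have hsgn : Equiv.Perm.sign σs⁻¹ = 1 := by
    rw [Equiv.Perm.sign_inv, hσs, hF]
    exact sort_sign_one hm hg hI hpair hd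
  rw [hsgn]
  simpa using hZ (F ∘ σs) hh

lemma sort_comp_perm {k n : ℕ} (g : Fin k → Fin n) (hg : StrictMono g)
    (σ : Equiv.Perm (Fin k)) : Tuple.sort (g ∘ σ) = σ⁻¹ := by
  have h1 : (g ∘ σ) ∘ ⇑σ⁻¹ = (g ∘ σ) ∘ Tuple.sort (g ∘ σ) := by
    apply Tuple.comp_sort_eq_comp_iff_monotone.2
    have : (g ∘ σ) ∘ ⇑σ⁻¹ = g := by
      funext x; simp [Function.comp, Equiv.Perm.coe_inv]
    rw [this]
    exact hg.monotone
  have hinj : Function.Injective (g ∘ σ) := hg.injective.comp (Equiv.injective _)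
  ext x
  exact (hinj (congrFun h1.symm x) : Tuple.sort (g ∘ σ) x = σ⁻¹ x) ▸ rfl

/-- Strict coarse boundary condition, `m` even: for `Y = C Z` with `C, Z` positive and
`I = (i_1, i_1+1, …, i_{m/2}, i_{m/2}+1)` strictly increasing, `⟨Y, I⟩ > 0`. -/
theorem stmt7 (k m n : ℕ) (hm : Even m) (hmn : k + m ≤ n)
    (Z : Matrix (Fin n) (Fin (k + m)) ℝ) (hZ : PosMaximalMinors Z)
    (C : Matrix (Fin k) (Fin n) ℝ) (hC : PosRowMinors C)
    (I : Fin m → Fin n) (hI : StrictMono I) (hpair : ConsecPairs I) :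
    0 < twistor Z (C * Z) I := by
  classical
  set D : (Fin k → Fin n) → ℝ := fun f => Matrix.det (Matrix.of fun i j : Fin k ⊕ Fin m =>
    Z (Sum.elim f I i) (finSumFinEquiv j)) with hD
  have h0 : twistor Z (C * Z) I = ∑ f : Fin k → Fin n, (∏ a, C a (f a)) * D f :=
    expand_det k m n Z C I
  set T := Finset.univ.filter
    (fun f : Fin k → Fin n => Function.Injective f ∧ ∀ a b, f a ≠ I b) with hT
  have hvanish : ∀ f : Fin k → Fin n,
      ¬(Function.Injective f ∧ ∀ a b, f a ≠ I b) → D f = 0 := by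
    intro f hf
    by_cases hinj : Function.Injective f
    · push_neg at hf
      obtain ⟨a, b, hab⟩ := hf hinj
      refine Matrix.det_zero_of_row_eq (i := Sum.inl a) (j := Sum.inr b) (by simp) ?_
      funext j
      simp [hab]
    · rw [Function.not_injective_iff] at hinj
      obtain ⟨a, a', hfa, hne⟩ := hinj
      refine Matrix.det_zero_of_row_eq (i := Sum.inl a) (j := Sum.inl a')
        (by simp [hne]) ?_
      funext j
      simp [hfa]
  have h1 : ∑ f : Fin k → Fin n, (∏ a, C a (f a)) * D f
      = ∑ f ∈ T, (∏ a, C a (f a)) * D f := by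
    rw [hT]
    refine (Finset.sum_filter_of_ne ?_).symm
    intro f _ hne
    by_contra hP
    exact hne (by rw [hvanish f hP, mul_zero])
  set G := Finset.univ.filter
    (fun g : Fin k → Fin n => StrictMono g ∧ ∀ a b, g a ≠ I b) with hG
  have h2 : ∑ f ∈ T, (∏ a, C a (f a)) * D f
      = ∑ q ∈ G ×ˢ (Finset.univ : Finset (Equiv.Perm (Fin k))),
          (∏ a, C a (q.1 (q.2 a))) * D (q.1 ∘ q.2) := by
    refine Finset.sum_nbij' (fun f => (f ∘ Tuple.sort f, (Tuple.sort f)⁻¹))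
      (fun q => q.1 ∘ q.2) ?_ ?_ ?_ ?_ ?_
    · intro f hf
      rw [hT, Finset.mem_filter] at hf
      obtain ⟨-, hinj, hdis⟩ := hf
      rw [Finset.mem_product, hG, Finset.mem_filter]
      refine ⟨⟨Finset.mem_univ _, ?_, ?_⟩, Finset.mem_univ _⟩
      · exact (Tuple.monotone_sort f).strictMono_of_injective
          (hinj.comp (Equiv.injective _))
      · intro a b; exact hdis _ b
    · intro q hq
      rw [Finset.mem_product, hG, Finset.mem_filter] at hq
      obtain ⟨⟨-, hsm, hdis⟩, -⟩ := hq
      rw [hT, Finset.mem_filter]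
      exact ⟨Finset.mem_univ _, hsm.injective.comp (Equiv.injective _),
        fun a b => hdis _ b⟩
    · intro f hf
      rw [hT, Finset.mem_filter] at hf
      obtain ⟨-, hinj, -⟩ := hf
      funext x
      simp [Function.comp, Equiv.Perm.coe_inv]
    · intro q hq
      rw [Finset.mem_product, hG, Finset.mem_filter] at hq
      obtain ⟨⟨-, hsm, -⟩, -⟩ := hq
      have hs := sort_comp_perm q.1 hsm q.2
      ext : 1
      · funext x
        show (q.1 ∘ q.2) (Tuple.sort (q.1 ∘ q.2) x) = q.1 x
        rw [hs]; simp [Function.comp, Equiv.Perm.coe_inv]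
      · show (Tuple.sort (q.1 ∘ ⇑q.2))⁻¹ = q.2
        rw [hs, inv_inv]
    · intro f hf
      have hcomp : (f ∘ ⇑(Tuple.sort f)) ∘ ⇑(Tuple.sort f)⁻¹ = f := by
        funext x; simp [Function.comp, Equiv.Perm.coe_inv]
      refine congrArg₂ (· * ·) (Finset.prod_congr rfl fun a _ => ?_) ?_
      · exact (congrArg (C a) (congrFun hcomp a)).symm
      · exact (congrArg D hcomp).symm
  rw [h0, h1, h2, Finset.sum_product]
  have hDg : ∀ g : Fin k → Fin n, (∀ a b, g a ≠ I b) →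
      ∀ σ : Equiv.Perm (Fin k), D (g ∘ σ) = (Equiv.Perm.sign σ : ℤ) * D g := by
    intro g hdis σ
    have hmat : (Matrix.of fun i j : Fin k ⊕ Fin m => Z (Sum.elim (g ∘ σ) I i) (finSumFinEquiv j))
        = (Matrix.of fun i j : Fin k ⊕ Fin m => Z (Sum.elim g I i) (finSumFinEquiv j)).submatrix
            (Equiv.sumCongr σ (Equiv.refl (Fin m))) id := by
      ext i j
      cases i with
      | inl a => simp
      | inr b => simp
    rw [hD]
    show Matrix.det _ = _
    rw [hmat, Matrix.det_permute]
    rw [Equiv.Perm.sign_sumCongr]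
    simp
  have hinner : ∀ g : Fin k → Fin n, (∀ a b, g a ≠ I b) →
      ∑ σ : Equiv.Perm (Fin k), (∏ a, C a (g (σ a))) * D (g ∘ σ)
        = Matrix.det (Matrix.of fun a b => C a (g b)) * D g := by
    intro g hdis
    have hdet : Matrix.det (Matrix.of fun a b => C a (g b))
        = ∑ σ : Equiv.Perm (Fin k), ((Equiv.Perm.sign σ : ℤ) : ℝ) * ∏ i, C i (g (σ i)) := by
      rw [← Matrix.det_transpose, Matrix.det_apply']
      rfl
    rw [hdet, Finset.sum_mul]
    refine Finset.sum_congr rfl ?_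
    intro σ _
    rw [hDg g hdis σ]
    ring
  have hstep : ∀ g ∈ G, ∑ σ : Equiv.Perm (Fin k), (∏ a, C a (g (σ a))) * D (g ∘ σ)
      = Matrix.det (Matrix.of fun a b => C a (g b)) * D g := by
    intro g hg
    rw [hG, Finset.mem_filter] at hg
    exact hinner g hg.2.2
  rw [Finset.sum_congr rfl hstep]
  -- positivity
  have hGne : G.Nonempty := by
    have hcard : k ≤ (Finset.univ \ Finset.univ.image I).card := by
      rw [Finset.card_sdiff_of_subset (Finset.subset_univ _),
        Finset.card_image_of_injective _ hI.injective]
      simp only [Finset.card_univ, Fintype.card_fin]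
      omega
    refine ⟨fun a => Finset.orderEmbOfCardLe _ hcard a, ?_⟩
    rw [hG, Finset.mem_filter]
    refine ⟨Finset.mem_univ _, (Finset.orderEmbOfCardLe _ hcard).strictMono, ?_⟩
    intro a b hab
    have hmem := Finset.orderEmbOfCardLe_mem _ hcard a
    rw [Finset.mem_sdiff] at hmem
    apply hmem.2
    have hab' : (Finset.orderEmbOfCardLe _ hcard) a = I b := hab
    rw [hab']
    exact Finset.mem_image_of_mem I (Finset.mem_univ b)
  refine Finset.sum_pos ?_ hGne
  intro g hg
  rw [hG, Finset.mem_filter] at hg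
  obtain ⟨-, hsm, hdis⟩ := hg
  exact mul_pos (hC g hsm) (Dg_pos hm Z hZ hsm hI hpair hdis)
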